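/- There exists a temporal fair division instance with identical days in which all agents have identical valuations, such that no allocation of M is SD-EF1 up to each day. In particular, this holds for the instance with 12 agents and four identical days, where each day t ∈ [4] brings six goods g_{1,t},...,g_{6,t}, and every agent values g_{l,t} at 7−l for each l ∈ [6] and t ∈ [4]. -/
import Mathlib

open Finset
open scoped Classical

noncomputable section

/-- `A` is an allocation of the set of goods `S` among `n` agents. -/
def IsAlloc {G : Type*} (n : ℕ) (S : Finset G) (A : Fin n → Finset G) : Prop :=
  (∀ i j : Fin n, i ≠ j → Disjoint (A i) (A j)) ∧ Finset.univ.biUnion A = S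

/-- The top-set `H_i(S,g) = {g' ∈ S : v g' ≥ v g}`. -/
def topSet {G : Type*} (v : G → ℝ) (S : Finset G) (g : G) : Finset G :=
  S.filter (fun g' => v g ≤ v g')

/-- Stochastic dominance: `X ≽^SD Y` w.r.t. valuation `v` over the set of goods `S`. -/
def SDge {G : Type*} [DecidableEq G] (v : G → ℝ) (S X Y : Finset G) : Prop :=
  ∀ g ∈ S, (Y ∩ topSet v S g).card ≤ (X ∩ topSet v S g).card

/-- The allocation `A` of goods `S` is SD-EF1. -/
def SDEF1 {G : Type*} [DecidableEq G] (n : ℕ) (v : Fin n → G → ℝ) (S : Finset G)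
    (A : Fin n → Finset G) : Prop :=
  ∀ i j : Fin n, A j ≠ ∅ → ∃ g ∈ A j, SDge (v i) S (A i) ((A j).erase g)

/-- The union of the goods of the first days, up to and including day `t`. -/
def upTo {G : Type*} [DecidableEq G] {k : ℕ} (M : Fin k → Finset G) (t : Fin k) : Finset G :=
  (Finset.Iic t).biUnion M

/-- Good `g_{l,t}` (for `l ∈ [6]`, `t ∈ [4]`) is encoded as `(l-1, t-1) : Fin 6 × Fin 4`.
Day `t` brings the six goods `g_{1,t}, …, g_{6,t}`. -/
def M9 : Fin 4 → Finset (Fin 6 × Fin 4) := fun t => Finset.univ.filter (fun p => p.2 = t)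

/-- Every agent values `g_{l,t}` at `7 − l` (with `l` 1-indexed). -/
def v9 : Fin 6 × Fin 4 → ℝ := fun p => 7 - ((p.1 : ℕ) + 1)

/-! ### Auxiliary lemmas -/

lemma v9_le {p q : Fin 6 × Fin 4} : v9 p ≤ v9 q ↔ (q.1 : ℕ) ≤ (p.1 : ℕ) := by
  simp only [v9, sub_le_sub_iff_left]
  constructor
  · intro h
    have h' : ((q.1 : ℕ) : ℝ) ≤ ((p.1 : ℕ) : ℝ) := by linarith
    exact_mod_cast h'
  · intro h
    have h' : ((q.1 : ℕ) : ℝ) ≤ ((p.1 : ℕ) : ℝ) := by exact_mod_cast h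
    linarith

section SDgeLemmas
variable {G : Type*} [DecidableEq G] {v : G → ℝ} {S Y : Finset G}

lemma sdge_empty_right (h : SDge v S ∅ Y) (hY : Y ⊆ S) : Y = ∅ := by
  by_contra hne
  obtain ⟨y, hy⟩ := Finset.nonempty_iff_ne_empty.2 hne
  have h' := h y (hY hy)
  have hyt : y ∈ Y ∩ topSet v S y :=
    Finset.mem_inter.2 ⟨hy, Finset.mem_filter.2 ⟨hY hy, le_refl _⟩⟩
  have hpos := Finset.card_pos.2 ⟨y, hyt⟩
  simp only [Finset.empty_inter, Finset.card_empty] at h'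
  omega

lemma sdge_singleton {a : G} (h : SDge v S {a} Y) (hY : Y ⊆ S) :
    Y.card ≤ 1 ∧ ∀ y ∈ Y, v y ≤ v a := by
  constructor
  · by_contra hc
    push_neg at hc
    obtain ⟨y1, hy1, y2, hy2, hne⟩ := Finset.one_lt_card.1 hc
    rcases le_total (v y1) (v y2) with hv | hv
    · have h' := h y1 (hY hy1)
      have hsub : ({y1, y2} : Finset G) ⊆ Y ∩ topSet v S y1 := by
        intro x hx
        rcases Finset.mem_insert.1 hx with rfl | hx
        · exact Finset.mem_inter.2 ⟨hy1, Finset.mem_filter.2 ⟨hY hy1, le_refl _⟩⟩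
        · rw [Finset.mem_singleton] at hx
          subst hx
          exact Finset.mem_inter.2 ⟨hy2, Finset.mem_filter.2 ⟨hY hy2, hv⟩⟩
      have h2 : 2 ≤ (Y ∩ topSet v S y1).card := by
        have := Finset.card_le_card hsub
        rwa [Finset.card_insert_of_notMem (by simpa using hne), Finset.card_singleton] at this
      have h1 : ({a} ∩ topSet v S y1).card ≤ 1 := by
        have := Finset.card_le_card
          (Finset.inter_subset_left : {a} ∩ topSet v S y1 ⊆ {a})
        simpa using this
      omega
    · have h' := h y2 (hY hy2)
      have hsub : ({y1, y2} : Finset G) ⊆ Y ∩ topSet v S y2 := by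
        intro x hx
        rcases Finset.mem_insert.1 hx with rfl | hx
        · exact Finset.mem_inter.2 ⟨hy1, Finset.mem_filter.2 ⟨hY hy1, hv⟩⟩
        · rw [Finset.mem_singleton] at hx
          subst hx
          exact Finset.mem_inter.2 ⟨hy2, Finset.mem_filter.2 ⟨hY hy2, le_refl _⟩⟩
      have h2 : 2 ≤ (Y ∩ topSet v S y2).card := by
        have := Finset.card_le_card hsub
        rwa [Finset.card_insert_of_notMem (by simpa using hne), Finset.card_singleton] at this
      have h1 : ({a} ∩ topSet v S y2).card ≤ 1 := by
        have := Finset.card_le_card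
          (Finset.inter_subset_left : {a} ∩ topSet v S y2 ⊆ {a})
        simpa using this
      omega
  · intro y hy
    have h' := h y (hY hy)
    have hyt : y ∈ Y ∩ topSet v S y :=
      Finset.mem_inter.2 ⟨hy, Finset.mem_filter.2 ⟨hY hy, le_refl _⟩⟩
    have hpos := Finset.card_pos.2 ⟨y, hyt⟩
    have : 0 < ({a} ∩ topSet v S y).card := by omega
    obtain ⟨x, hx⟩ := Finset.card_pos.1 this
    have hx1 := Finset.mem_inter.1 hx
    have : x = a := Finset.mem_singleton.1 hx1.1
    subst this
    exact (Finset.mem_filter.1 hx1.2).2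

lemma sdge_exists {X : Finset G} (h : SDge v S X Y) (hY : Y ⊆ S) {y : G} (hy : y ∈ Y) :
    ∃ x ∈ X, v y ≤ v x := by
  have h' := h y (hY hy)
  have hyt : y ∈ Y ∩ topSet v S y :=
    Finset.mem_inter.2 ⟨hy, Finset.mem_filter.2 ⟨hY hy, le_refl _⟩⟩
  have hpos := Finset.card_pos.2 ⟨y, hyt⟩
  have : 0 < (X ∩ topSet v S y).card := by omega
  obtain ⟨x, hx⟩ := Finset.card_pos.1 this
  have hx1 := Finset.mem_inter.1 hx
  exact ⟨x, hx1.1, (Finset.mem_filter.1 hx1.2).2⟩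

end SDgeLemmas

/-- The purely combinatorial core of the impossibility. -/
lemma abs_lemma (d s : Fin 6 → ℕ)
    (hd5 : ∀ l, d l ≤ 5) (hs5 : ∀ l, s l ≤ 5)
    (hC : ∀ v : ℕ, 3 ≤ v → v ≤ 5 →
      (univ.filter (fun l => d l = v)).card + (univ.filter (fun l => s l = v)).card = 2)
    (h2 : ∀ l l' : Fin 6, s l' ≤ max (d l) (l : ℕ))
    (h4 : ∀ l l' : Fin 6, min (d l) (l : ℕ) ≤ max (s l') (l' : ℕ)) : False := by
  obtain ⟨lm, -, hmax⟩ := Finset.exists_max_image (univ : Finset (Fin 6)) s ⟨0, mem_univ 0⟩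
  have hm' : ∀ l, s l ≤ s lm := fun l => hmax l (mem_univ l)
  have hm5 : s lm ≤ 5 := hs5 lm
  have hs0 : ∀ v : ℕ, s lm < v → (univ.filter (fun l => s l = v)).card = 0 := by
    intro v hv
    rw [Finset.card_eq_zero, Finset.filter_eq_empty_iff]
    intro l _
    have := hm' l
    omega
  have hcase : s lm ≤ 2 ∨ s lm = 3 ∨ s lm = 4 ∨ s lm = 5 := by omega
  rcases hcase with hm | hm | hm | hm
  · -- all s ≤ 2
    have hsle : ∀ l, s l ≤ 2 := fun l => le_trans (hm' l) hm
    have hd2 : ∀ v : ℕ, 3 ≤ v → v ≤ 5 → (univ.filter (fun l => d l = v)).card = 2 := by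
      intro v h3 h5
      have := hC v h3 h5
      have := hs0 v (by omega)
      omega
    by_cases hd3 : 3 ≤ d 3
    · have h := h4 3 0
      have h3 : ((3 : Fin 6) : ℕ) = 3 := rfl
      have h0 : ((0 : Fin 6) : ℕ) = 0 := rfl
      have := hsle 0
      omega
    · push_neg at hd3
      have hsub : (univ.filter (fun l => d l = 3)) ∪ (univ.filter (fun l => d l = 4))
          ∪ (univ.filter (fun l => d l = 5)) ⊆ univ.erase 3 := by
        intro x hx
        simp only [mem_union, mem_filter, mem_univ, true_and] at hx
        refine mem_erase.2 ⟨?_, mem_univ x⟩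
        rintro rfl
        omega
      have hcard : ((univ.filter (fun l => d l = 3)) ∪ (univ.filter (fun l => d l = 4))
          ∪ (univ.filter (fun l => d l = 5))).card = 6 := by
        rw [Finset.card_union_of_disjoint, Finset.card_union_of_disjoint]
        · rw [hd2 3 (by omega) (by omega), hd2 4 (by omega) (by omega),
            hd2 5 (by omega) (by omega)]
        · rw [Finset.disjoint_left]
          intro a ha hb
          simp only [mem_filter] at ha hb
          omega
        · rw [Finset.disjoint_left]
          intro a ha hb
          simp only [mem_union, mem_filter] at ha hb
          omega
      have := Finset.card_le_card hsub
      rw [hcard] at this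
      have : (univ.erase (3 : Fin 6)).card = 5 := by decide
      omega
  · -- m = 3
    have hsle : ∀ l, s l ≤ 3 := fun l => le_trans (hm' l) (le_of_eq hm)
    have hd45 : ∀ v : ℕ, 4 ≤ v → v ≤ 5 → (univ.filter (fun l => d l = v)).card = 2 := by
      intro v h4' h5
      have := hC v (by omega) h5
      have := hs0 v (by omega)
      omega
    have hcnt3 : (univ.filter (fun l => s l = 3)).card ≤ 2 := by
      have := hC 3 (by omega) (by omega); omega
    set P := univ.filter (fun l => 4 ≤ d l) with hP
    have hPcard : P.card = 4 := by
      have hsplit : P = (univ.filter (fun l => d l = 4)) ∪ (univ.filter (fun l => d l = 5)) := by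
        ext x
        simp only [hP, mem_union, mem_filter, mem_univ, true_and]
        have := hd5 x
        omega
      rw [hsplit, Finset.card_union_of_disjoint, hd45 4 (by omega) (by omega),
        hd45 5 (by omega) (by omega)]
      rw [Finset.disjoint_left]
      intro a ha hb
      simp only [mem_filter] at ha hb
      omega
    have hPsub : P ⊆ ({0,1,2,3} : Finset (Fin 6)) := by
      intro x hx
      simp only [hP, mem_filter, mem_univ, true_and] at hx
      have h := h4 x 0
      have h0 : ((0 : Fin 6) : ℕ) = 0 := rfl
      have hx3 : (x : ℕ) ≤ 3 := by
        have := hsle 0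
        omega
      have : ∀ y : Fin 6, (y : ℕ) ≤ 3 → y ∈ ({0,1,2,3} : Finset (Fin 6)) := by decide
      exact this x hx3
    have hPeq : P = ({0,1,2,3} : Finset (Fin 6)) := by
      apply Finset.eq_of_subset_of_card_le hPsub
      rw [hPcard]
      decide
    have h3P : (3 : Fin 6) ∈ P := by rw [hPeq]; decide
    have hd34 : 4 ≤ d 3 := by
      simp only [hP, mem_filter] at h3P
      exact h3P.2
    have hs03 : s 0 = 3 := by
      have h := h4 3 0
      have h3 : ((3 : Fin 6) : ℕ) = 3 := rfl
      have h0 : ((0 : Fin 6) : ℕ) = 0 := rfl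
      have := hsle 0
      omega
    have hl0 : s 1 ≤ 2 ∨ s 2 ≤ 2 := by
      by_contra hcon
      push_neg at hcon
      have h1 : s 1 = 3 := by have := hsle 1; omega
      have h2' : s 2 = 3 := by have := hsle 2; omega
      have hsub : ({0,1,2} : Finset (Fin 6)) ⊆ univ.filter (fun l => s l = 3) := by
        intro x hx
        fin_cases hx <;> simp [hs03, h1, h2']
      have := Finset.card_le_card hsub
      have hc3 : ({0,1,2} : Finset (Fin 6)).card = 3 := by decide
      omega
    rcases hl0 with h | h
    · have hh := h4 3 1
      have h3 : ((3 : Fin 6) : ℕ) = 3 := rfl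
      have h1 : ((1 : Fin 6) : ℕ) = 1 := rfl
      omega
    · have hh := h4 3 2
      have h3 : ((3 : Fin 6) : ℕ) = 3 := rfl
      have h1 : ((2 : Fin 6) : ℕ) = 2 := rfl
      omega
  · -- m = 4
    have hsub : ({0,1,2,3} : Finset (Fin 6)) ⊆
        (univ.filter (fun l => d l = 4)) ∪ (univ.filter (fun l => d l = 5)) := by
      intro x hx
      have h := h2 x lm
      have hd := hd5 x
      simp only [mem_union, mem_filter, mem_univ, true_and]
      have hxv : (x : ℕ) ≤ 3 := by fin_cases hx <;> decide
      omega
    have hcard : ({0,1,2,3} : Finset (Fin 6)).card = 4 := by decide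
    have hle := Finset.card_le_card hsub
    have hun : ((univ.filter (fun l => d l = 4)) ∪ (univ.filter (fun l => d l = 5))).card ≤
        (univ.filter (fun l => d l = 4)).card + (univ.filter (fun l => d l = 5)).card :=
      Finset.card_union_le _ _
    have hcnt4 : (univ.filter (fun l => s l = 4)).card ≥ 1 := by
      refine Finset.card_pos.2 ⟨lm, ?_⟩
      simp [hm]
    have hC4 := hC 4 (by omega) (by omega)
    have hC5 := hC 5 (by omega) (by omega)
    have h50 := hs0 5 (by omega)
    omega
  · -- m = 5
    have hsub : ({0,1,2,3,4} : Finset (Fin 6)) ⊆ univ.filter (fun l => d l = 5) := by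
      intro x hx
      have h := h2 x lm
      have hd := hd5 x
      simp only [mem_filter, mem_univ, true_and]
      have hxv : (x : ℕ) ≤ 4 := by fin_cases hx <;> decide
      omega
    have hcard : ({0,1,2,3,4} : Finset (Fin 6)).card = 5 := by decide
    have hle := Finset.card_le_card hsub
    have hcnt5 : (univ.filter (fun l => s l = 5)).card ≥ 1 := by
      refine Finset.card_pos.2 ⟨lm, ?_⟩
      simp [hm]
    have hC5 := hC 5 (by omega) (by omega)
    omega

theorem identical_days_identical_vals_no_sdef1_upToEachDay :
    (∀ t t' : Fin 4, ∃ f : Fin 6 × Fin 4 → Fin 6 × Fin 4,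
      Set.BijOn f ↑(M9 t) ↑(M9 t') ∧ ∀ g ∈ M9 t, v9 g = v9 (f g)) ∧
    ∀ A : Fin 12 → Finset (Fin 6 × Fin 4),
      IsAlloc 12 (Finset.univ.biUnion M9) A →
      ¬ (∀ t : Fin 4, SDEF1 12 (fun _ => v9) (upTo M9 t) (fun i => A i ∩ upTo M9 t)) := by
  constructor
  · intro t t'
    refine ⟨fun p => (p.1, t'), ⟨?_, ?_, ?_⟩, ?_⟩
    · intro p hp
      simp only [M9, coe_filter, Set.mem_setOf_eq, mem_univ, true_and] at *
    · intro p hp q hq hpq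
      simp only [M9, coe_filter, Set.mem_setOf_eq, mem_univ, true_and] at hp hq
      have hpq' : (p.1, t') = (q.1, t') := hpq
      rw [Prod.mk.injEq] at hpq'
      exact Prod.ext hpq'.1 (hp.trans hq.symm)
    · intro q hq
      simp only [M9, coe_filter, Set.mem_setOf_eq, mem_univ, true_and] at hq
      refine ⟨(q.1, t), ?_, ?_⟩
      · simp [M9]
      · exact Prod.ext rfl hq.symm
    · intro g _
      rfl
  · intro A hA hSD
    obtain ⟨hdisj, hun⟩ := hA
    have hex : ∀ p : Fin 6 × Fin 4, ∃ i, p ∈ A i := by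
      intro p
      have h := Finset.ext_iff.1 hun p
      simp only [Finset.mem_biUnion] at h
      obtain ⟨i, -, hi⟩ := h.2 ⟨p.2, mem_univ _, by simp [M9]⟩
      exact ⟨i, hi⟩
    -- sums of cards
    have hsum : ∀ t : Fin 4, ∑ i, (A i ∩ upTo M9 t).card = (upTo M9 t).card := by
      intro t
      rw [← Finset.card_biUnion]
      · congr 1
        ext p
        simp only [Finset.mem_biUnion, Finset.mem_inter, Finset.mem_univ, true_and]
        constructor
        · rintro ⟨i, -, hp⟩
          exact hp
        · intro hp
          obtain ⟨i, hi⟩ := hex p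
          exact ⟨i, hi, hp⟩
      · intro i _ j _ hij
        exact (hdisj i j hij).mono Finset.inter_subset_left Finset.inter_subset_left
    -- Day 2 : every bundle is a singleton
    have hB1card : ∀ i, (A i ∩ upTo M9 1).card = 1 := by
      have hnz : ∀ i, (A i ∩ upTo M9 1).Nonempty := by
        intro i
        by_contra hemp
        rw [Finset.not_nonempty_iff_eq_empty] at hemp
        have hle : ∀ j, (A j ∩ upTo M9 1).card ≤ 1 := by
          intro j
          by_cases hj : A j ∩ upTo M9 1 = ∅
          · simp [hj]
          · obtain ⟨g, hg, hsd⟩ := hSD 1 i j hj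
            replace hg : g ∈ A j ∩ upTo M9 1 := hg
            replace hsd : SDge v9 (upTo M9 1) (A i ∩ upTo M9 1) ((A j ∩ upTo M9 1).erase g) := hsd
            rw [hemp] at hsd
            have herase := sdge_empty_right hsd
              (subset_trans (Finset.erase_subset _ _) Finset.inter_subset_right)
            have hsub : A j ∩ upTo M9 1 ⊆ {g} := by
              intro x hx
              by_cases hxg : x = g
              · simp [hxg]
              · exfalso
                have hmem : x ∈ (A j ∩ upTo M9 1).erase g := Finset.mem_erase.2 ⟨hxg, hx⟩
                rw [herase] at hmem
                exact absurd hmem (Finset.notMem_empty x)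
            have := Finset.card_le_card hsub
            simpa using this
        have h12 := hsum 1
        rw [(by decide : (upTo M9 1).card = 12)] at h12
        have hsplit : ∑ x ∈ Finset.univ.erase i, (A x ∩ upTo M9 1).card
            + (A i ∩ upTo M9 1).card = ∑ x : Fin 12, (A x ∩ upTo M9 1).card :=
          Finset.sum_erase_add _ _ (mem_univ i)
        have hub : ∑ x ∈ Finset.univ.erase i, (A x ∩ upTo M9 1).card ≤
            (Finset.univ.erase i).card * 1 := by
          apply Finset.sum_le_card_nsmul
          intro x _
          exact hle x
        have hec : (Finset.univ.erase i).card = 11 := by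
          rw [Finset.card_erase_of_mem (mem_univ i), Finset.card_univ]
          simp
        rw [hemp] at hsplit
        simp only [Finset.card_empty] at hsplit
        omega
      intro i
      by_contra hne
      have h2le : 2 ≤ (A i ∩ upTo M9 1).card := by
        have := Finset.card_pos.2 (hnz i)
        omega
      have hlt : ∑ _j : Fin 12, (1:ℕ) < ∑ j, (A j ∩ upTo M9 1).card :=
        Finset.sum_lt_sum (fun j _ => Finset.card_pos.2 (hnz j)) ⟨i, mem_univ i, by omega⟩
      have h12 := hsum 1
      rw [(by decide : (upTo M9 1).card = 12)] at h12
      simp only [Finset.sum_const, Finset.card_univ, Fintype.card_fin, smul_eq_mul,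
        mul_one] at hlt
      omega
    choose old hold using fun i => Finset.card_eq_one.1 (hB1card i)
    have hold_mem : ∀ i, old i ∈ A i := by
      intro i
      have : old i ∈ A i ∩ upTo M9 1 := by rw [hold i]; exact Finset.mem_singleton_self _
      exact (Finset.mem_inter.1 this).1
    have hold_up : ∀ i, old i ∈ upTo M9 1 := by
      intro i
      have : old i ∈ A i ∩ upTo M9 1 := by rw [hold i]; exact Finset.mem_singleton_self _
      exact (Finset.mem_inter.1 this).2
    -- decompositions
    have hdec2 : ∀ i, A i ∩ upTo M9 2 = (A i ∩ upTo M9 1) ∪ (A i ∩ M9 2) := by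
      intro i
      rw [(by decide : upTo M9 2 = upTo M9 1 ∪ M9 2), Finset.inter_union_distrib_left]
    have hdisj12 : Disjoint (upTo M9 1) (M9 2) := by decide
    have hcard2 : ∀ i, (A i ∩ upTo M9 2).card = 1 + (A i ∩ M9 2).card := by
      intro i
      rw [hdec2 i, Finset.card_union_of_disjoint
        (hdisj12.mono Finset.inter_subset_right Finset.inter_subset_right), hB1card i]
    have hdec3 : ∀ i, A i ∩ upTo M9 3 = (A i ∩ upTo M9 2) ∪ (A i ∩ M9 3) := by
      intro i
      rw [(by decide : upTo M9 3 = upTo M9 2 ∪ M9 3), Finset.inter_union_distrib_left]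
    have hdisj23 : Disjoint (upTo M9 2) (M9 3) := by decide
    have hcard3 : ∀ i, (A i ∩ upTo M9 3).card = (A i ∩ upTo M9 2).card + (A i ∩ M9 3).card := by
      intro i
      rw [hdec3 i, Finset.card_union_of_disjoint
        (hdisj23.mono Finset.inter_subset_right Finset.inter_subset_right)]
    -- Day 3 : some singleton exists, and all bundles have card ≤ 2
    have hB2pos : ∀ i, 1 ≤ (A i ∩ upTo M9 2).card := by
      intro i
      rw [hcard2 i]
      omega
    have hsingle : ∃ i0, (A i0 ∩ upTo M9 2).card = 1 := by
      by_contra hcon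
      push_neg at hcon
      have hge : ∀ i, 2 ≤ (A i ∩ upTo M9 2).card := by
        intro i
        have := hB2pos i
        have := hcon i
        omega
      have hlow : ∑ _j : Fin 12, (2:ℕ) ≤ ∑ j, (A j ∩ upTo M9 2).card :=
        Finset.sum_le_sum (fun j _ => hge j)
      have h18 := hsum 2
      rw [(by decide : (upTo M9 2).card = 18)] at h18
      simp only [Finset.sum_const, Finset.card_univ, Fintype.card_fin, smul_eq_mul] at hlow
      omega
    obtain ⟨i0, hi0⟩ := hsingle
    have hi0eq : A i0 ∩ upTo M9 2 = {old i0} := by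
      symm
      apply Finset.eq_of_subset_of_card_le
      · intro x hx
        rw [Finset.mem_singleton] at hx
        subst hx
        refine Finset.mem_inter.2 ⟨hold_mem i0, ?_⟩
        have : upTo M9 1 ⊆ upTo M9 2 := by decide
        exact this (hold_up i0)
      · rw [hi0, Finset.card_singleton]
    have hB2le : ∀ j, (A j ∩ upTo M9 2).card ≤ 2 := by
      intro j
      have hne : A j ∩ upTo M9 2 ≠ ∅ := by
        have := hB2pos j
        intro h
        rw [h] at this
        simp at this
      obtain ⟨g, hg, hsd⟩ := hSD 2 i0 j hne
      replace hg : g ∈ A j ∩ upTo M9 2 := hg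
      replace hsd : SDge v9 (upTo M9 2) (A i0 ∩ upTo M9 2) ((A j ∩ upTo M9 2).erase g) := hsd
      rw [hi0eq] at hsd
      have hss := sdge_singleton hsd
        (subset_trans (Finset.erase_subset _ _) Finset.inter_subset_right)
      have h1 := hss.1
      rw [Finset.card_erase_of_mem hg] at h1
      have := hB2pos j
      omega
    -- Day 4 : every bundle has exactly two goods
    have hB3card : ∀ i, (A i ∩ upTo M9 3).card = 2 := by
      have hge1 : ∀ i, 1 ≤ (A i ∩ upTo M9 3).card := by
        intro i
        rw [hcard3 i]
        have := hB2pos i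
        omega
      have hne3 : ∀ i, A i ∩ upTo M9 3 ≠ ∅ := by
        intro i h
        have := hge1 i
        rw [h] at this
        simp at this
      have hnot1 : ∀ i, (A i ∩ upTo M9 3).card ≠ 1 := by
        intro i h1
        obtain ⟨a, ha⟩ := Finset.card_eq_one.1 h1
        have hle2 : ∀ j, (A j ∩ upTo M9 3).card ≤ 2 := by
          intro j
          obtain ⟨g, hg, hsd⟩ := hSD 3 i j (hne3 j)
          replace hg : g ∈ A j ∩ upTo M9 3 := hg
          replace hsd : SDge v9 (upTo M9 3) (A i ∩ upTo M9 3) ((A j ∩ upTo M9 3).erase g) := hsd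
          rw [ha] at hsd
          have hss := sdge_singleton hsd
            (subset_trans (Finset.erase_subset _ _) Finset.inter_subset_right)
          have h1' := hss.1
          rw [Finset.card_erase_of_mem hg] at h1'
          have := hge1 j
          omega
        have h24 := hsum 3
        rw [(by decide : (upTo M9 3).card = 24)] at h24
        have hsplit : ∑ x ∈ Finset.univ.erase i, (A x ∩ upTo M9 3).card
            + (A i ∩ upTo M9 3).card = ∑ x : Fin 12, (A x ∩ upTo M9 3).card :=
          Finset.sum_erase_add _ _ (mem_univ i)
        have hub : ∑ x ∈ Finset.univ.erase i, (A x ∩ upTo M9 3).card ≤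
            (Finset.univ.erase i).card * 2 := by
          apply Finset.sum_le_card_nsmul
          intro x _
          exact hle2 x
        have hec : (Finset.univ.erase i).card = 11 := by
          rw [Finset.card_erase_of_mem (mem_univ i), Finset.card_univ]
          simp
        rw [h1] at hsplit
        omega
      have hge2 : ∀ i, 2 ≤ (A i ∩ upTo M9 3).card := by
        intro i
        have := hge1 i
        have := hnot1 i
        omega
      intro i
      by_contra hne
      have h3le : 3 ≤ (A i ∩ upTo M9 3).card := by
        have := hge2 i
        omega
      have hlt : ∑ _j : Fin 12, (2:ℕ) < ∑ j, (A j ∩ upTo M9 3).card :=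
        Finset.sum_lt_sum (fun j _ => hge2 j) ⟨i, mem_univ i, by omega⟩
      have h24 := hsum 3
      rw [(by decide : (upTo M9 3).card = 24)] at h24
      simp only [Finset.sum_const, Finset.card_univ, Fintype.card_fin, smul_eq_mul] at hlt
      omega
    -- owners of day-3 and day-4 goods
    choose ow2 how2 using fun l : Fin 6 => hex (l, 2)
    choose ow3 how3 using fun l : Fin 6 => hex (l, 3)
    have hmem2 : ∀ l : Fin 6, ((l, (2:Fin 4)) : Fin 6 × Fin 4) ∈ A (ow2 l) ∩ M9 2 := by
      intro l
      exact Finset.mem_inter.2 ⟨how2 l, by simp [M9]⟩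
    have hmem3 : ∀ l : Fin 6, ((l, (3:Fin 4)) : Fin 6 × Fin 4) ∈ A (ow3 l) ∩ M9 3 := by
      intro l
      exact Finset.mem_inter.2 ⟨how3 l, by simp [M9]⟩
    have hcol2le : ∀ j, (A j ∩ M9 2).card ≤ 1 := by
      intro j
      have := hB2le j
      have := hcard2 j
      omega
    have hcol2eq : ∀ l : Fin 6, A (ow2 l) ∩ M9 2 = {(l, 2)} := by
      intro l
      symm
      apply Finset.eq_of_subset_of_card_le
      · intro x hx
        rw [Finset.mem_singleton] at hx
        subst hx
        exact hmem2 l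
      · rw [Finset.card_singleton]
        exact hcol2le _
    have hB2ow2 : ∀ l : Fin 6, A (ow2 l) ∩ upTo M9 2 = {old (ow2 l), (l, 2)} := by
      intro l
      rw [hdec2, hold, hcol2eq]
      rfl
    have hold_ne : ∀ j (l : Fin 6), old j ≠ (l, (2:Fin 4)) ∧ old j ≠ (l, (3:Fin 4)) := by
      intro j l
      have hup := hold_up j
      have hfact : ∀ p ∈ upTo M9 1, p.2 ≠ (2:Fin 4) ∧ p.2 ≠ (3:Fin 4) := by decide
      have := hfact _ hup
      constructor <;> intro h <;> rw [h] at this <;> simp at this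
    have hB2ow2card : ∀ l : Fin 6, (A (ow2 l) ∩ upTo M9 2).card = 2 := by
      intro l
      rw [hB2ow2 l, Finset.card_insert_of_notMem (by simp [(hold_ne (ow2 l) l).1]),
        Finset.card_singleton]
    have hcol3ow2 : ∀ l : Fin 6, A (ow2 l) ∩ M9 3 = ∅ := by
      intro l
      have h3 := hB3card (ow2 l)
      have h2 := hB2ow2card l
      have hc := hcard3 (ow2 l)
      rw [← Finset.card_eq_zero]
      omega
    have hB3ow2 : ∀ l : Fin 6, A (ow2 l) ∩ upTo M9 3 = {old (ow2 l), (l, 2)} := by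
      intro l
      rw [hdec3, hcol3ow2, Finset.union_empty, hB2ow2]
    have hB2ow3 : ∀ l : Fin 6, A (ow3 l) ∩ upTo M9 2 = {old (ow3 l)} := by
      intro l
      have hc1 : (A (ow3 l) ∩ upTo M9 2).card = 1 := by
        have h3 := hB3card (ow3 l)
        have hc := hcard3 (ow3 l)
        have hp := hB2pos (ow3 l)
        have hcol : 1 ≤ (A (ow3 l) ∩ M9 3).card := Finset.card_pos.2 ⟨_, hmem3 l⟩
        omega
      symm
      apply Finset.eq_of_subset_of_card_le
      · intro x hx
        rw [Finset.mem_singleton] at hx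
        subst hx
        refine Finset.mem_inter.2 ⟨hold_mem _, ?_⟩
        have : upTo M9 1 ⊆ upTo M9 2 := by decide
        exact this (hold_up _)
      · rw [hc1, Finset.card_singleton]
    have hcol3eq : ∀ l : Fin 6, A (ow3 l) ∩ M9 3 = {(l, 3)} := by
      intro l
      have hc1 : (A (ow3 l) ∩ M9 3).card = 1 := by
        have h3 := hB3card (ow3 l)
        have hc := hcard3 (ow3 l)
        have h2 : (A (ow3 l) ∩ upTo M9 2).card = 1 := by
          rw [hB2ow3 l, Finset.card_singleton]
        omega
      symm
      apply Finset.eq_of_subset_of_card_le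
      · intro x hx
        rw [Finset.mem_singleton] at hx
        subst hx
        exact hmem3 l
      · rw [hc1, Finset.card_singleton]
    have hB3ow3 : ∀ l : Fin 6, A (ow3 l) ∩ upTo M9 3 = {old (ow3 l), (l, 3)} := by
      intro l
      rw [hdec3, hB2ow3, hcol3eq]
      rfl
    -- injectivity and disjointness of owners
    have how2inj : ∀ l l' : Fin 6, ow2 l = ow2 l' → l = l' := by
      intro l l' h
      have := hmem2 l'
      rw [← h, hcol2eq l, Finset.mem_singleton] at this
      have := congrArg Prod.fst this
      exact this.symm
    have how3inj : ∀ l l' : Fin 6, ow3 l = ow3 l' → l = l' := by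
      intro l l' h
      have := hmem3 l'
      rw [← h, hcol3eq l, Finset.mem_singleton] at this
      have := congrArg Prod.fst this
      exact this.symm
    have howdisj : ∀ l l' : Fin 6, ow2 l ≠ ow3 l' := by
      intro l l' h
      have := hmem3 l'
      rw [← h, hcol3ow2 l] at this
      exact absurd this (Finset.notMem_empty _)
    -- the level functions
    have hd5 : ∀ l : Fin 6, ((old (ow2 l)).1 : ℕ) ≤ 5 :=
      fun l => Nat.lt_succ_iff.1 (old (ow2 l)).1.isLt
    have hs5 : ∀ l : Fin 6, ((old (ow3 l)).1 : ℕ) ≤ 5 :=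
      fun l => Nat.lt_succ_iff.1 (old (ow3 l)).1.isLt
    -- injectivity of the old-good maps
    have hφ2inj : Function.Injective (fun l => old (ow2 l)) := by
      intro l l' h
      simp only at h
      by_cases hw : ow2 l = ow2 l'
      · exact how2inj l l' hw
      · exfalso
        have h1 := hold_mem (ow2 l)
        have h2 := hold_mem (ow2 l')
        rw [← h] at h2
        exact Finset.disjoint_left.1 (hdisj _ _ hw) h1 h2
    have hφ3inj : Function.Injective (fun l => old (ow3 l)) := by
      intro l l' h
      simp only at h
      by_cases hw : ow3 l = ow3 l'
      · exact how3inj l l' hw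
      · exfalso
        have h1 := hold_mem (ow3 l)
        have h2 := hold_mem (ow3 l')
        rw [← h] at h2
        exact Finset.disjoint_left.1 (hdisj _ _ hw) h1 h2
    have hφ23 : ∀ l l' : Fin 6, old (ow2 l) ≠ old (ow3 l') := by
      intro l l' h
      have h1 := hold_mem (ow2 l)
      have h2 := hold_mem (ow3 l')
      rw [← h] at h2
      exact Finset.disjoint_left.1 (hdisj _ _ (howdisj l l')) h1 h2
    -- image sets
    have hI2card : (Finset.univ.image (fun l => old (ow2 l))).card = 6 := by
      rw [Finset.card_image_of_injective _ hφ2inj, Finset.card_univ]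
      simp
    have hI3card : (Finset.univ.image (fun l => old (ow3 l))).card = 6 := by
      rw [Finset.card_image_of_injective _ hφ3inj, Finset.card_univ]
      simp
    have hIdisj : Disjoint (Finset.univ.image (fun l => old (ow2 l)))
        (Finset.univ.image (fun l => old (ow3 l))) := by
      rw [Finset.disjoint_left]
      intro a ha hb
      rw [Finset.mem_image] at ha
      rw [Finset.mem_image] at hb
      obtain ⟨l, -, hl⟩ := ha
      obtain ⟨l', -, hl'⟩ := hb
      exact hφ23 l l' (hl.trans hl'.symm)
    have hIeq : Finset.univ.image (fun l => old (ow2 l))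
        ∪ Finset.univ.image (fun l => old (ow3 l)) = upTo M9 1 := by
      apply Finset.eq_of_subset_of_card_le
      · intro x hx
        rcases Finset.mem_union.1 hx with hx | hx
        · rw [Finset.mem_image] at hx
          obtain ⟨l, -, hl⟩ := hx
          rw [← hl]
          exact hold_up _
        · rw [Finset.mem_image] at hx
          obtain ⟨l, -, hl⟩ := hx
          rw [← hl]
          exact hold_up _
      · rw [Finset.card_union_of_disjoint hIdisj, hI2card, hI3card,
          (by decide : (upTo M9 1).card = 12)]
    -- the count hypothesis
    have hC : ∀ v : ℕ, 3 ≤ v → v ≤ 5 →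
        (Finset.univ.filter (fun l : Fin 6 => ((old (ow2 l)).1 : ℕ) = v)).card +
        (Finset.univ.filter (fun l : Fin 6 => ((old (ow3 l)).1 : ℕ) = v)).card = 2 := by
      intro v h3 h5
      have hbase : ((upTo M9 1).filter (fun g => ((g.1 : ℕ) = v))).card = 2 := by
        interval_cases v <;> decide
      rw [← hIeq, Finset.filter_union, Finset.card_union_of_disjoint
        (Finset.disjoint_filter_filter hIdisj)] at hbase
      have e2 : ((Finset.univ.image (fun l => old (ow2 l))).filter
          (fun g => ((g.1 : ℕ) = v))).card =
          (Finset.univ.filter (fun l : Fin 6 => ((old (ow2 l)).1 : ℕ) = v)).card := by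
        rw [Finset.filter_image, Finset.card_image_of_injective _ hφ2inj]
      have e3 : ((Finset.univ.image (fun l => old (ow3 l))).filter
          (fun g => ((g.1 : ℕ) = v))).card =
          (Finset.univ.filter (fun l : Fin 6 => ((old (ow3 l)).1 : ℕ) = v)).card := by
        rw [Finset.filter_image, Finset.card_image_of_injective _ hφ3inj]
      omega
    -- hypothesis h2
    have h2 : ∀ l l' : Fin 6, ((old (ow3 l')).1 : ℕ) ≤ max ((old (ow2 l)).1 : ℕ) (l : ℕ) := by
      intro l l'
      have hne : A (ow2 l) ∩ upTo M9 2 ≠ ∅ := by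
        rw [hB2ow2]
        simp
      obtain ⟨g, hg, hsd⟩ := hSD 2 (ow3 l') (ow2 l) hne
      replace hg : g ∈ A (ow2 l) ∩ upTo M9 2 := hg
      replace hsd : SDge v9 (upTo M9 2) (A (ow3 l') ∩ upTo M9 2)
        ((A (ow2 l) ∩ upTo M9 2).erase g) := hsd
      rw [hB2ow3] at hsd
      obtain ⟨-, hval⟩ := sdge_singleton hsd
        (subset_trans (Finset.erase_subset _ _) Finset.inter_subset_right)
      have hcarde : ((A (ow2 l) ∩ upTo M9 2).erase g).card = 1 := by
        rw [Finset.card_erase_of_mem hg, hB2ow2card l]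
      obtain ⟨y, hy⟩ := Finset.card_eq_one.1 hcarde
      have hymem : y ∈ A (ow2 l) ∩ upTo M9 2 :=
        Finset.mem_of_mem_erase (hy ▸ Finset.mem_singleton_self y)
      have hvy : v9 y ≤ v9 (old (ow3 l')) :=
        hval y (hy ▸ Finset.mem_singleton_self y)
      rw [v9_le] at hvy
      rw [hB2ow2 l, Finset.mem_insert, Finset.mem_singleton] at hymem
      rcases hymem with rfl | rfl
      · exact le_trans hvy (le_max_left _ _)
      · exact le_trans hvy (le_max_right _ _)
    -- hypothesis h4
    have h4 : ∀ l l' : Fin 6,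
        min ((old (ow2 l)).1 : ℕ) (l : ℕ) ≤ max ((old (ow3 l')).1 : ℕ) (l' : ℕ) := by
      intro l l'
      have hne : A (ow3 l') ∩ upTo M9 3 ≠ ∅ := by
        rw [hB3ow3]
        simp
      obtain ⟨g, hg, hsd⟩ := hSD 3 (ow2 l) (ow3 l') hne
      replace hg : g ∈ A (ow3 l') ∩ upTo M9 3 := hg
      replace hsd : SDge v9 (upTo M9 3) (A (ow2 l) ∩ upTo M9 3)
        ((A (ow3 l') ∩ upTo M9 3).erase g) := hsd
      have hcarde : ((A (ow3 l') ∩ upTo M9 3).erase g).card = 1 := by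
        rw [Finset.card_erase_of_mem hg, hB3card]
      obtain ⟨y, hy⟩ := Finset.card_eq_one.1 hcarde
      have hymem : y ∈ A (ow3 l') ∩ upTo M9 3 :=
        Finset.mem_of_mem_erase (hy ▸ Finset.mem_singleton_self y)
      obtain ⟨x, hx, hvyx⟩ := sdge_exists hsd
        (subset_trans (Finset.erase_subset _ _) Finset.inter_subset_right)
        (hy ▸ Finset.mem_singleton_self y)
      rw [v9_le] at hvyx
      rw [hB3ow2 l, Finset.mem_insert, Finset.mem_singleton] at hx
      rw [hB3ow3 l', Finset.mem_insert, Finset.mem_singleton] at hymem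
      have hxle : min ((old (ow2 l)).1 : ℕ) (l : ℕ) ≤ ((x.1 : ℕ)) := by
        rcases hx with rfl | rfl
        · exact min_le_left _ _
        · exact min_le_right _ _
      have hyle : ((y.1 : ℕ)) ≤ max ((old (ow3 l')).1 : ℕ) (l' : ℕ) := by
        rcases hymem with rfl | rfl
        · exact le_max_left _ _
        · exact le_max_right _ _
      omega
    exact abs_lemma (fun l => ((old (ow2 l)).1 : ℕ)) (fun l => ((old (ow3 l)).1 : ℕ))
      hd5 hs5 hC h2 h4
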